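/- Let X be a real Hausdorff locally convex topological vector space, let f : X → ℝ be a continuous convex function, let Ω ⊆ X be a convex set, and let x̄ ∈ Ω. Then x̄ is a global minimizer of f over Ω (i.e., f(x̄) ≤ f(x) for all x ∈ Ω) if and only if there exists a continuous linear functional x* on X such that x* is a subgradient of f at x̄ and −x* belongs to the normal cone N(x̄; Ω), i.e., 0 ∈ ∂f(x̄) + N(x̄; Ω). -/

import Mathlib

/-- Characterization of optimal solutions to convex constrained minimization problems
in a real Hausdorff locally convex topological vector space: `xbar ∈ Ω` minimizes the
continuous convex function `f` over the convex set `Ω` iff `0 ∈ ∂f(xbar) + N(xbar; Ω)`,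
i.e. there is a continuous linear functional `x*` that is a subgradient of `f` at `xbar`
with `-x* ∈ N(xbar; Ω)`. -/
theorem optimality_condition_convex_problem
    {X : Type*} [AddCommGroup X] [Module ℝ X] [TopologicalSpace X]
    [IsTopologicalAddGroup X] [ContinuousSMul ℝ X] [LocallyConvexSpace ℝ X] [T2Space X]
    (f : X → ℝ) (hf_cont : Continuous f) (hf_conv : ConvexOn ℝ Set.univ f)
    (Ω : Set X) (hΩ : Convex ℝ Ω) (xbar : X) (hxbar : xbar ∈ Ω) :
    (∀ x ∈ Ω, f xbar ≤ f x) ↔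
      ∃ xs : X →L[ℝ] ℝ,
        (∀ x : X, xs (x - xbar) ≤ f x - f xbar) ∧ (∀ x ∈ Ω, (-xs) (x - xbar) ≤ 0) := by
  constructor
  · intro hmin
    -- strict epigraph of f
    set A : Set (X × ℝ) := {p : X × ℝ | f p.1 < p.2} with hA
    have hAopen : IsOpen A := isOpen_lt (hf_cont.comp continuous_fst) continuous_snd
    have hAconv : Convex ℝ A := by
      have := hf_conv.convex_strict_epigraph
      convert this using 1
      ext p
      simp [A]
    set B : Set (X × ℝ) := Ω ×ˢ Set.Iic (f xbar) with hB
    have hBconv : Convex ℝ B := hΩ.prod (convex_Iic _)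
    have hdisj : Disjoint A B := by
      rw [Set.disjoint_left]
      rintro ⟨x, t⟩ hAx ⟨hxΩ, ht⟩
      exact absurd (hmin x hxΩ) (not_le.2 (lt_of_lt_of_le hAx ht))
    obtain ⟨φ, u, hu1, hu2⟩ := geometric_hahn_banach_open hAconv hAopen hBconv hdisj
    set a : ℝ := φ (0, 1) with ha
    have hsplit : ∀ x : X, ∀ t : ℝ, φ (x, t) = φ (x, 0) + t * a := by
      intro x t
      have : (x, t) = (x, 0) + t • ((0 : X), (1 : ℝ)) := by
        simp [Prod.ext_iff]
      rw [this, map_add, map_smul]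
      simp [ha, smul_eq_mul]
    -- a < 0
    have hbar : ∀ t : ℝ, 0 < t → φ (xbar, f xbar + t) < u := by
      intro t ht
      exact hu1 _ (by simpa [A] using lt_add_of_pos_right (f xbar) ht)
    have hubar : u ≤ φ (xbar, f xbar) := hu2 _ ⟨hxbar, le_refl (f xbar)⟩
    have haneg : a < 0 := by
      have h1 := lt_of_lt_of_le (hbar 1 one_pos) hubar
      rw [hsplit xbar (f xbar + 1), hsplit xbar (f xbar)] at h1
      nlinarith
    have hanz : (0:ℝ) < -a := by linarith
    refine ⟨(-a)⁻¹ • φ.comp (ContinuousLinearMap.inl ℝ X ℝ), ?_, ?_⟩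
    · intro x
      have key : ∀ ε : ℝ, 0 < ε → (-a)⁻¹ * φ (x - xbar, 0) ≤ f x - f xbar + ε := by
        intro ε hε
        have h1 : φ (x, f x + ε) < u := hu1 _ (by simpa [A] using lt_add_of_pos_right (f x) hε)
        have h2 := lt_of_lt_of_le h1 hubar
        rw [hsplit x (f x + ε), hsplit xbar (f xbar)] at h2
        have h3 : φ (x - xbar, 0) = φ (x, 0) - φ (xbar, 0) := by
          have : ((x - xbar : X), (0:ℝ)) = (x, 0) - (xbar, 0) := by simp [Prod.ext_iff]
          rw [this, map_sub]
        rw [h3]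
        rw [inv_mul_le_iff₀ hanz]
        nlinarith
      simp only [ContinuousLinearMap.smul_apply, ContinuousLinearMap.comp_apply,
        ContinuousLinearMap.inl_apply, smul_eq_mul]
      refine le_of_forall_pos_le_add ?_
      intro ε hε
      exact key ε hε
    · intro x hx
      simp only [ContinuousLinearMap.neg_apply, ContinuousLinearMap.smul_apply,
        ContinuousLinearMap.comp_apply, ContinuousLinearMap.inl_apply, smul_eq_mul,
        neg_nonpos]
      have hc : (0:ℝ) ≤ φ (x - xbar, 0) := by
        by_contra hcon
        push_neg at hcon
        set c := φ (x - xbar, 0) with hcdef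
        have hε : 0 < c / a := div_pos_of_neg_of_neg hcon haneg
        have h1 : φ (xbar, f xbar + c / a) < u := hbar _ hε
        have h2 : u ≤ φ (x, f xbar) := hu2 _ ⟨hx, le_refl (f xbar)⟩
        have h3 := lt_of_lt_of_le h1 h2
        rw [hsplit xbar (f xbar + c / a), hsplit x (f xbar)] at h3
        have h4 : φ (x - xbar, 0) = φ (x, 0) - φ (xbar, 0) := by
          have : ((x - xbar : X), (0:ℝ)) = (x, 0) - (xbar, 0) := by simp [Prod.ext_iff]
          rw [this, map_sub]
        have h5 : c / a * a = c := div_mul_cancel₀ c (ne_of_lt haneg)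
        rw [← hcdef] at h4
        nlinarith
      positivity
  · rintro ⟨xs, hsub, hnorm⟩ x hx
    have h1 := hsub x
    have h2 := hnorm x hx
    simp only [ContinuousLinearMap.neg_apply, neg_nonpos] at h2
    linarith
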